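/- Let N₁, N₂ be positive natural numbers; let Q₁ : Fin N₁ → ℝ and Q₂ : Fin N₂ → ℝ be real charges with ∑_{k} Q₂ k = 0; let W₁ : Fin N₁ → ℂ and W₂ : Fin N₂ → ℂ be charge points; let w_β, w_c2, w₁₀ ∈ ℂ with w_β ≠ w_c2. Define ζ(w) = ((w − w_c2)/(w_β − w_c2)) · Complex.exp( ∑_{k} Q₁ k · (Complex.log((w − W₁ k)/(w₁₀ − W₁ k)) − Complex.log((w_β − W₁ k)/(w₁₀ − W₁ k))) + ∑_{k} Q₂ k · (Complex.log((w − W₂ k)/(w − w_c2)) − Complex.log((w_β − W₂ k)/(w_β − w_c2))) ). Let r > 0, and let w ∈ ℂ satisfy w ≠ w_c2, w ≠ W₁ k and w_β ≠ W₁ k and w₁₀ ≠ W₁ k for all k, and w ≠ W₂ k and w_β ≠ W₂ k for all k. Then ‖ζ(w)‖ = r if and only if ∑_{k} Q₁ k · Real.log ‖(w − W₁ k)/(w_β − W₁ k)‖ + ∑_{k} Q₂ k · Real.log ‖(w − W₂ k)/(w_β − W₂ k)‖ − Real.log r = − Real.log ‖(w − w_c2)/(w_β − w_c2)‖. -/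

import Mathlib

theorem stmt_18 (N₁ N₂ : ℕ) (hN₁ : 0 < N₁) (hN₂ : 0 < N₂)
    (Q₁ : Fin N₁ → ℝ) (Q₂ : Fin N₂ → ℝ) (hQ₂ : ∑ k, Q₂ k = 0)
    (W₁ : Fin N₁ → ℂ) (W₂ : Fin N₂ → ℂ) (w_β w_c2 w₁₀ : ℂ) (hβc : w_β ≠ w_c2)
    (r : ℝ) (hr : 0 < r) (w : ℂ) (hw : w ≠ w_c2)
    (hW₁ : ∀ k, w ≠ W₁ k ∧ w_β ≠ W₁ k ∧ w₁₀ ≠ W₁ k)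
    (hW₂ : ∀ k, w ≠ W₂ k ∧ w_β ≠ W₂ k) :
    ‖((w - w_c2) / (w_β - w_c2)) *
        Complex.exp
          ((∑ k, (Q₁ k : ℂ) *
              (Complex.log ((w - W₁ k) / (w₁₀ - W₁ k)) -
                Complex.log ((w_β - W₁ k) / (w₁₀ - W₁ k)))) +
            ∑ k, (Q₂ k : ℂ) *
              (Complex.log ((w - W₂ k) / (w - w_c2)) -
                Complex.log ((w_β - W₂ k) / (w_β - w_c2))))‖ = r
      ↔ (∑ k, Q₁ k * Real.log ‖(w - W₁ k) / (w_β - W₁ k)‖) +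
          (∑ k, Q₂ k * Real.log ‖(w - W₂ k) / (w_β - W₂ k)‖) - Real.log r
        = - Real.log ‖(w - w_c2) / (w_β - w_c2)‖ := by
  have hwc : w - w_c2 ≠ 0 := sub_ne_zero.mpr hw
  have hβc' : w_β - w_c2 ≠ 0 := sub_ne_zero.mpr hβc
  set S : ℂ := (∑ k, (Q₁ k : ℂ) *
              (Complex.log ((w - W₁ k) / (w₁₀ - W₁ k)) -
                Complex.log ((w_β - W₁ k) / (w₁₀ - W₁ k)))) +
            ∑ k, (Q₂ k : ℂ) *
              (Complex.log ((w - W₂ k) / (w - w_c2)) -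
                Complex.log ((w_β - W₂ k) / (w_β - w_c2))) with hS
  set a : ℂ := (w - w_c2) / (w_β - w_c2) with ha
  have ha0 : a ≠ 0 := div_ne_zero hwc hβc'
  have hnorm : ‖a * Complex.exp S‖ = ‖a‖ * Real.exp S.re := by
    rw [norm_mul, Complex.norm_exp]
  -- compute S.re
  have hSre : S.re = (∑ k, Q₁ k * Real.log ‖(w - W₁ k) / (w_β - W₁ k)‖) +
      (∑ k, Q₂ k * Real.log ‖(w - W₂ k) / (w_β - W₂ k)‖) := by
    rw [hS, Complex.add_re, Complex.re_sum, Complex.re_sum]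
    congr 1
    · refine Finset.sum_congr rfl fun k _ => ?_
      obtain ⟨h1, h2, h3⟩ := hW₁ k
      have h1' : w - W₁ k ≠ 0 := sub_ne_zero.mpr h1
      have h2' : w_β - W₁ k ≠ 0 := sub_ne_zero.mpr h2
      have h3' : w₁₀ - W₁ k ≠ 0 := sub_ne_zero.mpr h3
      have : ((Q₁ k : ℂ) * (Complex.log ((w - W₁ k) / (w₁₀ - W₁ k)) -
          Complex.log ((w_β - W₁ k) / (w₁₀ - W₁ k)))).re
          = Q₁ k * ((Complex.log ((w - W₁ k) / (w₁₀ - W₁ k))).re -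
            (Complex.log ((w_β - W₁ k) / (w₁₀ - W₁ k))).re) := by
        simp [Complex.mul_re, Complex.sub_re]
      rw [this, Complex.log_re, Complex.log_re]
      have e1 : ‖(w - W₁ k) / (w₁₀ - W₁ k)‖ = ‖w - W₁ k‖ / ‖w₁₀ - W₁ k‖ := by
        simp [map_div₀]
      have e2 : ‖(w_β - W₁ k) / (w₁₀ - W₁ k)‖ = ‖w_β - W₁ k‖ / ‖w₁₀ - W₁ k‖ := by
        simp [map_div₀]
      rw [e1, e2, Real.log_div (norm_ne_zero_iff.mpr h1') (norm_ne_zero_iff.mpr h3'),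
        Real.log_div (norm_ne_zero_iff.mpr h2') (norm_ne_zero_iff.mpr h3'),
        norm_div, Real.log_div (norm_ne_zero_iff.mpr h1') (norm_ne_zero_iff.mpr h2')]
      ring
    · have key : ∀ k, ((Q₂ k : ℂ) * (Complex.log ((w - W₂ k) / (w - w_c2)) -
          Complex.log ((w_β - W₂ k) / (w_β - w_c2)))).re
          = Q₂ k * Real.log ‖(w - W₂ k) / (w_β - W₂ k)‖
            + Q₂ k * (Real.log ‖w_β - w_c2‖ - Real.log ‖w - w_c2‖) := by
        intro k
        obtain ⟨h1, h2⟩ := hW₂ k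
        have h1' : w - W₂ k ≠ 0 := sub_ne_zero.mpr h1
        have h2' : w_β - W₂ k ≠ 0 := sub_ne_zero.mpr h2
        have : ((Q₂ k : ℂ) * (Complex.log ((w - W₂ k) / (w - w_c2)) -
            Complex.log ((w_β - W₂ k) / (w_β - w_c2)))).re
            = Q₂ k * ((Complex.log ((w - W₂ k) / (w - w_c2))).re -
              (Complex.log ((w_β - W₂ k) / (w_β - w_c2))).re) := by
          simp [Complex.mul_re, Complex.sub_re]
        rw [this, Complex.log_re, Complex.log_re]
        have e1 : ‖(w - W₂ k) / (w - w_c2)‖ = ‖w - W₂ k‖ / ‖w - w_c2‖ := by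
          simp [map_div₀]
        have e2 : ‖(w_β - W₂ k) / (w_β - w_c2)‖ = ‖w_β - W₂ k‖ / ‖w_β - w_c2‖ := by
          simp [map_div₀]
        rw [e1, e2, Real.log_div (norm_ne_zero_iff.mpr h1') (norm_ne_zero_iff.mpr hwc),
          Real.log_div (norm_ne_zero_iff.mpr h2') (norm_ne_zero_iff.mpr hβc'),
          norm_div, Real.log_div (norm_ne_zero_iff.mpr h1') (norm_ne_zero_iff.mpr h2')]
        ring
      rw [Finset.sum_congr rfl fun k _ => key k, Finset.sum_add_distrib,
        ← Finset.sum_mul, hQ₂, zero_mul, add_zero]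
  -- final equivalence
  have hla : ‖a‖ > 0 := norm_pos_iff.mpr ha0
  constructor
  · intro h
    have := congrArg Real.log (hnorm ▸ h)
    rw [Real.log_mul (ne_of_gt hla) (Real.exp_ne_zero _), Real.log_exp] at this
    rw [hSre] at this
    linarith
  · intro h
    rw [hnorm]
    have h2 : Real.log ‖a‖ + S.re = Real.log r := by rw [hSre]; linarith
    calc ‖a‖ * Real.exp S.re = Real.exp (Real.log ‖a‖ + S.re) := by
          rw [Real.exp_add, Real.exp_log hla]
      _ = r := by rw [h2, Real.exp_log hr]
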